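/- Let n ≥ 3 and let α ∈ ℂ with |α|² = 2. Let A be the n×n Hermitian matrix with A_{1,2} = α, A_{2,1} = conj(α), A_{j,j+1} = A_{j+1,j} = 1 for 2 ≤ j ≤ n−1, A_{n,n} = 1, and all other entries 0. Then det(A + 2I) = 4. -/

import Mathlib

/-- Pure tridiagonal path matrix with diagonal 2 (charge +1 on last vertex). -/
def pathMat (k : ℕ) : Matrix (Fin k) (Fin k) ℂ :=
  Matrix.of fun i j =>
    if (i : ℕ) = (j : ℕ) then (if (i : ℕ) = k - 1 then 3 else 2)
    else if (j : ℕ) = (i : ℕ) + 1 then 1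
    else if (i : ℕ) = (j : ℕ) + 1 then 1 else 0

theorem det_pathMat (k : ℕ) : (pathMat (k + 1)).det = 2 * (k : ℂ) + 3 := by
  induction k using Nat.strong_induction_on with
  | _ k ih =>
    match k with
    | 0 =>
      rw [Matrix.det_fin_one]
      norm_num [pathMat]
    | 1 =>
      rw [Matrix.det_fin_two]
      norm_num [pathMat]
    | (m + 2) =>
      have D1 := ih (m + 1) (by omega)
      have D0 := ih m (by omega)
      rw [show m + 2 + 1 = (m + 2).succ from rfl, Matrix.det_succ_row_zero,
        Fin.sum_univ_succ, Fin.sum_univ_succ]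
      have h00 : pathMat (m + 3) 0 0 = 2 := by
        simp only [pathMat, Matrix.of_apply, Fin.val_zero]
        try norm_num
        all_goals first | rfl | ring1 | omega | (exfalso; omega) | (split_ifs <;> first | rfl | ring1 | omega | (exfalso; omega))
      have h01 : pathMat (m + 3) 0 (Fin.succ 0) = 1 := by
        simp only [pathMat, Matrix.of_apply, Fin.val_zero, Fin.val_succ]
        try norm_num
        all_goals first | rfl | ring1 | omega | (exfalso; omega) | (split_ifs <;> first | rfl | ring1 | omega | (exfalso; omega))
      have hsub0 : (pathMat (m + 3)).submatrix Fin.succ ((0 : Fin (m+2+1)).succAbove)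
          = pathMat (m + 2) := by
        ext i j
        simp only [Fin.succAbove_zero, Matrix.submatrix_apply, pathMat, Matrix.of_apply,
          Fin.val_succ]
        try norm_num
        all_goals first | rfl | ring1 | omega | (exfalso; omega) | (split_ifs <;> first | rfl | ring1 | omega | (exfalso; omega))
      have hzero : ∀ j : Fin (m + 1),
          (-1 : ℂ) ^ ((j.succ.succ : Fin (m+2+1)) : ℕ) * pathMat (m + 3) 0 j.succ.succ *
            ((pathMat (m + 3)).submatrix Fin.succ (j.succ.succ).succAbove).det = 0 := by
        intro j
        have : pathMat (m + 3) 0 j.succ.succ = 0 := by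
          simp only [pathMat, Matrix.of_apply, Fin.val_zero, Fin.val_succ]
          try norm_num
          all_goals first | rfl | ring1 | omega | (exfalso; omega) | (split_ifs <;> first | rfl | ring1 | omega | (exfalso; omega))
        rw [this, mul_zero, zero_mul]
      rw [Finset.sum_eq_zero fun j _ => hzero j]
      have hQ : ((pathMat (m + 3)).submatrix Fin.succ ((Fin.succ 0 : Fin (m+2+1)).succAbove)).det
          = 2 * (m : ℂ) + 3 := by
        rw [Matrix.det_succ_column_zero, Fin.sum_univ_succ]
        have hQ00 : (pathMat (m + 3)).submatrix Fin.succ ((Fin.succ 0 : Fin (m+2+1)).succAbove) 0 0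
            = 1 := by
          simp only [Matrix.submatrix_apply, Fin.succ_succAbove_zero, pathMat, Matrix.of_apply,
            Fin.val_succ, Fin.val_zero]
          try norm_num
          all_goals first | rfl | ring1 | omega | (exfalso; omega) | (split_ifs <;> first | rfl | ring1 | omega | (exfalso; omega))
        have hQz : ∀ i : Fin (m + 1),
            (-1 : ℂ) ^ ((i.succ : Fin (m+2)) : ℕ) *
              (pathMat (m + 3)).submatrix Fin.succ ((Fin.succ 0 : Fin (m+2+1)).succAbove) i.succ 0 *
              (((pathMat (m + 3)).submatrix Fin.succ
                ((Fin.succ 0 : Fin (m+2+1)).succAbove)).submatrix i.succ.succAbove Fin.succ).det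
              = 0 := by
          intro i
          have : (pathMat (m + 3)).submatrix Fin.succ
              ((Fin.succ 0 : Fin (m+2+1)).succAbove) i.succ 0 = 0 := by
            simp only [Matrix.submatrix_apply, Fin.succ_succAbove_zero, pathMat, Matrix.of_apply,
              Fin.val_succ, Fin.val_zero]
            try norm_num
            all_goals first | rfl | ring1 | omega | (exfalso; omega) | (split_ifs <;> first | rfl | ring1 | omega | (exfalso; omega))
          rw [this, mul_zero, zero_mul]
        rw [Finset.sum_eq_zero fun i _ => hQz i]
        have hsub2 : ((pathMat (m + 3)).submatrix Fin.succ
            ((Fin.succ 0 : Fin (m+2+1)).succAbove)).submatrix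
              ((0 : Fin (m+1+1)).succAbove) Fin.succ = pathMat (m + 1) := by
          ext i j
          simp only [Fin.succAbove_zero, Matrix.submatrix_apply, Fin.succ_succAbove_succ,
            pathMat, Matrix.of_apply, Fin.val_succ]
          try norm_num
          all_goals first | rfl | ring1 | omega | (exfalso; omega) | (split_ifs <;> first | rfl | ring1 | omega | (exfalso; omega))
        rw [hsub2, hQ00, D0]
        simp
      rw [hsub0, h00, h01, hQ, D1]
      simp only [Fin.val_zero, Fin.val_succ, pow_zero, pow_one, zero_add]
      push_cast
      ring

/-- for the template 𝒫ₙ (path with first edge-weight α, |α|² = 2,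
remaining edge-weights 1, and charge +1 on the last vertex), det(A + 2I) = 4. -/
theorem stmt_7 (n : ℕ) (hn : 3 ≤ n) (α : ℂ) (hα : ‖α‖ ^ 2 = 2)
    (A : Matrix (Fin n) (Fin n) ℂ)
    (hAdef : ∀ i j : Fin n, A i j =
      if (i : ℕ) = 0 ∧ (j : ℕ) = 1 then α
      else if (i : ℕ) = 1 ∧ (j : ℕ) = 0 then starRingEnd ℂ α
      else if 1 ≤ (i : ℕ) ∧ (j : ℕ) = (i : ℕ) + 1 then 1
      else if 1 ≤ (j : ℕ) ∧ (i : ℕ) = (j : ℕ) + 1 then 1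
      else if (i : ℕ) = n - 1 ∧ (j : ℕ) = n - 1 then 1
      else 0) :
    (A + (2 : ℂ) • (1 : Matrix (Fin n) (Fin n) ℂ)).det = 4 := by
  obtain ⟨m, rfl⟩ : ∃ m, n = m + 3 := ⟨n - 3, by omega⟩
  set M := A + (2 : ℂ) • (1 : Matrix (Fin (m+3)) (Fin (m+3)) ℂ) with hMdef
  have hM : ∀ i j : Fin (m + 3), M i j = A i j + if (i : ℕ) = (j : ℕ) then 2 else 0 := by
    intro i j
    simp only [hMdef, Matrix.add_apply, Matrix.smul_apply, Matrix.one_apply, Fin.ext_iff,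
      smul_eq_mul]
    split_ifs <;> simp
  have hαα : α * starRingEnd ℂ α = 2 := by
    rw [Complex.mul_conj]
    norm_cast
    rw [← Complex.sq_norm, hα]
  rw [Matrix.det_succ_row_zero (n := m + 2) M, Fin.sum_univ_succ, Fin.sum_univ_succ]
  have h00 : M 0 0 = 2 := by
    rw [hM, hAdef]
    simp only [Fin.val_zero]
    try norm_num
    all_goals first | rfl | ring1 | omega | (exfalso; omega) | (split_ifs <;> first | rfl | ring1 | omega | (exfalso; omega))
  have h01 : M 0 (Fin.succ 0) = α := by
    rw [hM, hAdef]
    simp only [Fin.val_zero, Fin.val_succ]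
    try norm_num
    all_goals first | rfl | ring1 | omega | (exfalso; omega) | (split_ifs <;> first | rfl | ring1 | omega | (exfalso; omega))
  have hzero : ∀ j : Fin (m + 1),
      (-1 : ℂ) ^ ((j.succ.succ : Fin (m+2+1)) : ℕ) * M 0 j.succ.succ *
        (M.submatrix Fin.succ (j.succ.succ).succAbove).det = 0 := by
    intro j
    have : M 0 j.succ.succ = 0 := by
      rw [hM, hAdef]
      simp only [Fin.val_zero, Fin.val_succ]
      try norm_num
      all_goals first | rfl | ring1 | omega | (exfalso; omega) | (split_ifs <;> first | rfl | ring1 | omega | (exfalso; omega))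
    rw [this, mul_zero, zero_mul]
  rw [Finset.sum_eq_zero fun j _ => hzero j]
  have hsub0 : M.submatrix Fin.succ ((0 : Fin (m+2+1)).succAbove) = pathMat (m + 2) := by
    ext i j
    rw [Fin.succAbove_zero, Matrix.submatrix_apply, hM, hAdef]
    simp only [Fin.val_succ, pathMat, Matrix.of_apply]
    try norm_num
    all_goals first | rfl | ring1 | omega | (exfalso; omega) | (split_ifs <;> first | rfl | ring1 | omega | (exfalso; omega))
  have hQ : (M.submatrix Fin.succ ((Fin.succ 0 : Fin (m+2+1)).succAbove)).det
      = starRingEnd ℂ α * (2 * (m : ℂ) + 3) := by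
    rw [Matrix.det_succ_column_zero (n := m + 1), Fin.sum_univ_succ]
    have hQ00 : M.submatrix Fin.succ ((Fin.succ 0 : Fin (m+2+1)).succAbove) 0 0
        = starRingEnd ℂ α := by
      rw [Matrix.submatrix_apply, Fin.succ_succAbove_zero, hM, hAdef]
      simp only [Fin.val_succ, Fin.val_zero]
      try norm_num
      all_goals first | rfl | ring1 | omega | (exfalso; omega) | (split_ifs <;> first | rfl | ring1 | omega | (exfalso; omega))
    have hQz : ∀ i : Fin (m + 1),
        (-1 : ℂ) ^ ((i.succ : Fin (m+2)) : ℕ) *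
          M.submatrix Fin.succ ((Fin.succ 0 : Fin (m+2+1)).succAbove) i.succ 0 *
          ((M.submatrix Fin.succ
            ((Fin.succ 0 : Fin (m+2+1)).succAbove)).submatrix i.succ.succAbove Fin.succ).det
          = 0 := by
      intro i
      have : M.submatrix Fin.succ ((Fin.succ 0 : Fin (m+2+1)).succAbove) i.succ 0 = 0 := by
        rw [Matrix.submatrix_apply, Fin.succ_succAbove_zero, hM, hAdef]
        simp only [Fin.val_succ, Fin.val_zero]
        try norm_num
        all_goals first | rfl | ring1 | omega | (exfalso; omega) | (split_ifs <;> first | rfl | ring1 | omega | (exfalso; omega))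
      rw [this, mul_zero, zero_mul]
    rw [Finset.sum_eq_zero fun i _ => hQz i]
    have hsub2 : (M.submatrix Fin.succ ((Fin.succ 0 : Fin (m+2+1)).succAbove)).submatrix
        ((0 : Fin (m+1+1)).succAbove) Fin.succ = pathMat (m + 1) := by
      ext i j
      rw [Fin.succAbove_zero, Matrix.submatrix_apply, Matrix.submatrix_apply,
        Fin.succ_succAbove_succ, hM, hAdef]
      simp only [Fin.val_succ, pathMat, Matrix.of_apply]
      try norm_num
      all_goals first | rfl | ring1 | omega | (exfalso; omega) | (split_ifs <;> first | rfl | ring1 | omega | (exfalso; omega))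
    rw [hsub2, hQ00, det_pathMat m]
    simp
  rw [hsub0, h00, h01, hQ, det_pathMat (m + 1)]
  simp only [Fin.val_zero, Fin.val_succ, pow_zero, pow_one, zero_add]
  push_cast
  linear_combination (-(2 * (m : ℂ) + 3)) * hαα
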